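/- Let (E, F) be an antimatroid with rank closure operator σ, let N = {E \ X : X ∈ F} be the complementary convex geometry, and let τ : 2^E → 2^E be the closure operator τ(X) = ∩{A ∈ N : X ⊆ A}. Then for every X ⊆ E: E \ σ(X) = ex_τ(E \ X), where ex_τ(Y) = {y ∈ Y : y ∉ τ(Y \ {y})} is the set of extreme points of Y with respect to τ. -/
import Mathlib


/-- A greedoid on `E`: `∅` is feasible and larger feasible sets augment smaller ones. -/
def IsGreedoid {E : Type*} (F : Set (Set E)) : Prop :=
  ∅ ∈ F ∧ ∀ X ∈ F, ∀ Y ∈ F, Y.ncard < X.ncard → ∃ x ∈ X \ Y, insert x Y ∈ F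

/-- The rank function of a set system: `r X = max {|A| : A ⊆ X, A ∈ F}`. -/
noncomputable def greedoidRank {E : Type*} (F : Set (Set E)) (X : Set E) : ℕ :=
  sSup {n | ∃ A ∈ F, A ⊆ X ∧ A.ncard = n}

/-- The rank closure operator `σ X = {x : r (X ∪ {x}) = r X}`. -/
noncomputable def rankClosure {E : Type*} (F : Set (Set E)) (X : Set E) : Set E :=
  {x | greedoidRank F (insert x X) = greedoidRank F X}

/-- The set of extreme points of `Y` with respect to an operator `α`. -/
def extremePoints {E : Type*} (α : Set E → Set E) (Y : Set E) : Set E :=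
  {y ∈ Y | y ∉ α (Y \ {y})}

theorem stmt19 {E : Type*} [Fintype E] (F : Set (Set E)) (hF : IsGreedoid F)
    (hUnion : ∀ A ∈ F, ∀ B ∈ F, A ∪ B ∈ F)
    (N : Set (Set E)) (hN : N = {A : Set E | Aᶜ ∈ F})
    (τ : Set E → Set E) (hτ : ∀ X : Set E, τ X = ⋂₀ {A | A ∈ N ∧ X ⊆ A})
    (X : Set E) :
    (rankClosure F X)ᶜ = extremePoints τ Xᶜ := by
  obtain ⟨hempty, _⟩ := hF
  have hbdd : ∀ Y : Set E, BddAbove {n | ∃ A ∈ F, A ⊆ Y ∧ A.ncard = n} := by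
    intro Y
    refine ⟨Fintype.card E, ?_⟩
    rintro n ⟨A, _, _, rfl⟩
    simpa [Set.ncard_univ] using Set.ncard_le_ncard (Set.subset_univ A) Set.finite_univ
  have hne : ∀ Y : Set E, {n | ∃ A ∈ F, A ⊆ Y ∧ A.ncard = n}.Nonempty :=
    fun Y => ⟨0, ∅, hempty, Set.empty_subset _, Set.ncard_empty _⟩
  have hmem : ∀ Y : Set E, ∃ A ∈ F, A ⊆ Y ∧ A.ncard = greedoidRank F Y :=
    fun Y => Nat.sSup_mem (hne Y) (hbdd Y)
  have hle : ∀ (Y A : Set E), A ∈ F → A ⊆ Y → A.ncard ≤ greedoidRank F Y :=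
    fun Y A hA hAY => le_csSup (hbdd Y) ⟨A, hA, hAY, rfl⟩
  ext x
  simp only [Set.mem_compl_iff, rankClosure, Set.mem_setOf_eq, extremePoints, hτ, hN,
    Set.mem_sInter, Set.mem_setOf_eq, not_forall]
  constructor
  · intro h
    have hmono : greedoidRank F X ≤ greedoidRank F (insert x X) := by
      obtain ⟨A, hA, hAX, hAc⟩ := hmem X
      exact hAc ▸ hle _ A hA (hAX.trans (Set.subset_insert _ _))
    have hlt : greedoidRank F X < greedoidRank F (insert x X) := lt_of_le_of_ne hmono (Ne.symm h)
    obtain ⟨B, hB, hBX, hBc⟩ := hmem (insert x X)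
    have hxB : x ∈ B := by
      by_contra hxB
      have : B ⊆ X := fun y hy => ((hBX hy).resolve_left (fun he => hxB (he ▸ hy)))
      exact absurd (hBc ▸ hle X B hB this) (not_le.mpr hlt)
    have hxX : x ∉ X := by
      intro hx
      exact h (by rw [Set.insert_eq_of_mem hx])
    refine ⟨hxX, ⟨Bᶜ, ⟨by simpa using hB, ?_⟩, by simp [hxB]⟩⟩
    intro y hy
    simp only [Set.mem_diff, Set.mem_compl_iff, Set.mem_singleton_iff] at hy
    intro hyB
    rcases hBX hyB with rfl | hyX
    · exact hy.2 rfl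
    · exact hy.1 hyX
  · rintro ⟨hxX, A, ⟨hAF, hsub⟩, hxA⟩
    set B := Aᶜ with hBdef
    have hxB : x ∈ B := hxA
    have hBsub : B ⊆ insert x X := by
      intro y hy
      by_contra hyn
      simp only [Set.mem_insert_iff, not_or] at hyn
      exact hy (hsub ⟨hyn.2, hyn.1⟩)
    obtain ⟨C, hC, hCX, hCc⟩ := hmem X
    have hCB : C ∪ B ∈ F := hUnion C hC B hAF
    have hxC : x ∉ C := fun hx => hxX (hCX hx)
    have hins : insert x C ⊆ C ∪ B := Set.insert_subset (Or.inr hxB) Set.subset_union_left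
    have hcard : C.ncard + 1 ≤ (C ∪ B).ncard := by
      have := Set.ncard_le_ncard hins (Set.toFinite _)
      rwa [Set.ncard_insert_of_notMem hxC (Set.toFinite _)] at this
    have hsub' : C ∪ B ⊆ insert x X := Set.union_subset (hCX.trans (Set.subset_insert _ _)) hBsub
    have : greedoidRank F X + 1 ≤ greedoidRank F (insert x X) := by
      calc greedoidRank F X + 1 = C.ncard + 1 := by rw [hCc]
        _ ≤ (C ∪ B).ncard := hcard
        _ ≤ greedoidRank F (insert x X) := hle _ _ hCB hsub'
    omega
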